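/- Let {P̂,Ŷ} be a k-partition-with-sinks and assume some worst-case scenario for {P̂,Ŷ} exists. Then there exists a worst-case scenario s* for {P̂,Ŷ} such that, writing P_d = {l_d,...,r_d} for the dominant part of {P̂,Ŷ} under s*, the restriction of s* to {l_d,...,r_d} is left-dominant or right-dominant on {l_d,...,r_d}. -/

import Mathlib

/-- Maximum of `f` over a finite set of indices, with the empty maximum being `0`. -/
noncomputable def maxOver (S : Finset ℕ) (f : ℕ → ℝ) : ℝ := S.fold max 0 f

/-- Left evacuation time to sink `x t` of the subpath starting at `x l`, under weights `w`. -/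
noncomputable def thetaL (x : ℕ → ℝ) (τ : ℝ) (w : ℕ → ℝ) (l t : ℕ) : ℝ :=
  maxOver (Finset.Ico l t) (fun i => (x t - x i) * τ + ∑ j ∈ Finset.Icc l i, w j)

/-- Right evacuation time to sink `x t` of the subpath ending at `x r`, under weights `w`. -/
noncomputable def thetaR (x : ℕ → ℝ) (τ : ℝ) (w : ℕ → ℝ) (t r : ℕ) : ℝ :=
  maxOver (Finset.Ioc t r) (fun i => (x i - x t) * τ + ∑ j ∈ Finset.Icc i r, w j)

/-- 1-sink evacuation time `Θ¹([x_l,x_r], x_t, w)`. -/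
noncomputable def theta1 (x : ℕ → ℝ) (τ : ℝ) (w : ℕ → ℝ) (l t r : ℕ) : ℝ :=
  max (thetaL x τ w l t) (thetaR x τ w t r)

/-- A scenario assigns each vertex a weight within its bounds. -/
def IsScenario (n : ℕ) (wlo whi : ℕ → ℝ) (s : ℕ → ℝ) : Prop :=
  ∀ i, i ≤ n → wlo i ≤ s i ∧ s i ≤ whi i

/-- A `k`-partition-with-sinks of the vertex set `{0,…,n}` into `k` consecutive
nonempty blocks `{l p, …, r p}` (`p ∈ {1,…,k}`) with a sink `t p` in each block. -/
structure KPartSinks (n k : ℕ) where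
  l : ℕ → ℕ
  r : ℕ → ℕ
  t : ℕ → ℕ
  first : l 1 = 0
  last : r k = n
  consec : ∀ p, 1 ≤ p → p < k → l (p + 1) = r p + 1
  block_nonempty : ∀ p, 1 ≤ p → p ≤ k → l p ≤ r p
  sink_lb : ∀ p, 1 ≤ p → p ≤ k → l p ≤ t p
  sink_ub : ∀ p, 1 ≤ p → p ≤ k → t p ≤ r p

/-- `k`-sink evacuation time `Θᵏ(P, {P̂,Ŷ}, w)`. -/
noncomputable def thetaK {n k : ℕ} (x : ℕ → ℝ) (τ : ℝ) (PY : KPartSinks n k) (w : ℕ → ℝ) : ℝ :=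
  maxOver (Finset.Icc 1 k) (fun p => theta1 x τ w (PY.l p) (PY.t p) (PY.r p))

/-- Optimal `k`-sink evacuation time `Θᵏ_opt(P, w)`. -/
noncomputable def thetaOpt (x : ℕ → ℝ) (τ : ℝ) (n k : ℕ) (w : ℕ → ℝ) : ℝ :=
  sInf {v : ℝ | ∃ PY : KPartSinks n k, thetaK x τ PY w = v}

/-- Regret `R({P̂,Ŷ}, w)`. -/
noncomputable def regret {n k : ℕ} (x : ℕ → ℝ) (τ : ℝ) (PY : KPartSinks n k) (w : ℕ → ℝ) : ℝ :=
  thetaK x τ PY w - thetaOpt x τ n k w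

/-- Max-regret `R_max({P̂,Ŷ})`. -/
noncomputable def maxRegret {n k : ℕ} (x : ℕ → ℝ) (τ : ℝ) (wlo whi : ℕ → ℝ)
    (PY : KPartSinks n k) : ℝ :=
  sSup {v : ℝ | ∃ s : ℕ → ℝ, IsScenario n wlo whi s ∧ regret x τ PY s = v}

/-- A worst-case scenario: a scenario attaining the max-regret. -/
def IsWorstCase {n k : ℕ} (x : ℕ → ℝ) (τ : ℝ) (wlo whi : ℕ → ℝ) (PY : KPartSinks n k)
    (s : ℕ → ℝ) : Prop :=
  IsScenario n wlo whi s ∧ regret x τ PY s = maxRegret x τ wlo whi PY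

/-- `d` is the index of the dominant part of `{P̂,Ŷ}` under weights `w`:
the smallest index attaining `max_p Θ¹(P_p, y_p, w)`. -/
def IsDominant {n k : ℕ} (x : ℕ → ℝ) (τ : ℝ) (PY : KPartSinks n k) (w : ℕ → ℝ) (d : ℕ) : Prop :=
  1 ≤ d ∧ d ≤ k ∧
  (∀ p, 1 ≤ p → p ≤ k →
    theta1 x τ w (PY.l p) (PY.t p) (PY.r p) ≤ theta1 x τ w (PY.l d) (PY.t d) (PY.r d)) ∧
  (∀ p, 1 ≤ p → p < d →
    theta1 x τ w (PY.l p) (PY.t p) (PY.r p) < theta1 x τ w (PY.l d) (PY.t d) (PY.r d))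

/-- `R_{lr}(x_t)`: the max-regret of the subpath `[x_l,x_r]` as assumed dominant
part with sink `x_t`. -/
noncomputable def Rsink (x : ℕ → ℝ) (τ : ℝ) (wlo whi : ℕ → ℝ) (n k : ℕ) (l r t : ℕ) : ℝ :=
  sSup {v : ℝ | ∃ s : ℕ → ℝ, IsScenario n wlo whi s ∧
    theta1 x τ s l t r - thetaOpt x τ n k s = v}

/-- `R_{lr}`: the minimax regret of the subpath `[x_l,x_r]` as assumed dominant part. -/
noncomputable def Rlr (x : ℕ → ℝ) (τ : ℝ) (wlo whi : ℕ → ℝ) (n k : ℕ) (l r : ℕ) : ℝ :=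
  sInf {v : ℝ | ∃ t, l ≤ t ∧ t ≤ r ∧ Rsink x τ wlo whi n k l r t = v}

/-- A partition of `{0,…,i}` into `q` consecutive nonempty blocks `{l p, …, r p}`. -/
def IsQPartition (q i : ℕ) (l r : ℕ → ℕ) : Prop :=
  l 1 = 0 ∧ r q = i ∧ (∀ p, 1 ≤ p → p < q → l (p + 1) = r p + 1) ∧
  (∀ p, 1 ≤ p → p ≤ q → l p ≤ r p)

/-- `M(q, i)`: the minimum over partitions of `{0,…,i}` into `q` consecutive
nonempty blocks of `max_p R_{l_p r_p}`. -/
noncomputable def Mreg (x : ℕ → ℝ) (τ : ℝ) (wlo whi : ℕ → ℝ) (n k : ℕ) (q i : ℕ) : ℝ :=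
  sInf {v : ℝ | ∃ lf rf : ℕ → ℕ, IsQPartition q i lf rf ∧
    maxOver (Finset.Icc 1 q) (fun p => Rlr x τ wlo whi n k (lf p) (rf p)) = v}

/-- Left-dominant scenario on `{l,…,r}`. -/
def LeftDominant (wlo whi s : ℕ → ℝ) (l r : ℕ) : Prop :=
  ∃ i, l ≤ i ∧ i ≤ r + 1 ∧ (∀ j, l ≤ j → j < i → s j = whi j) ∧
    (∀ j, i ≤ j → j ≤ r → s j = wlo j)

/-- Right-dominant scenario on `{l,…,r}`. -/
def RightDominant (wlo whi s : ℕ → ℝ) (l r : ℕ) : Prop :=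
  ∃ i, l ≤ i ∧ i ≤ r + 1 ∧ (∀ j, l ≤ j → j < i → s j = wlo j) ∧
    (∀ j, i ≤ j → j ≤ r → s j = whi j)

/-! ### Auxiliary lemmas -/

lemma maxOver_nonneg {S : Finset ℕ} {f : ℕ → ℝ} : 0 ≤ maxOver S f :=
  (Finset.le_fold_max _).mpr (Or.inl le_rfl)

lemma le_maxOver {S : Finset ℕ} {f : ℕ → ℝ} {i : ℕ} (hi : i ∈ S) : f i ≤ maxOver S f :=
  (Finset.le_fold_max _).mpr (Or.inr ⟨i, hi, le_rfl⟩)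

lemma maxOver_le {S : Finset ℕ} {f : ℕ → ℝ} {c : ℝ} (h0 : 0 ≤ c) (h : ∀ i ∈ S, f i ≤ c) :
    maxOver S f ≤ c := (Finset.fold_max_le c).mpr ⟨h0, h⟩

lemma maxOver_congr {S : Finset ℕ} {f g : ℕ → ℝ} (h : ∀ i ∈ S, f i = g i) :
    maxOver S f = maxOver S g := Finset.fold_congr h

lemma theta1_nonneg {x : ℕ → ℝ} {τ : ℝ} {w : ℕ → ℝ} {l t r : ℕ} :
    0 ≤ theta1 x τ w l t r := le_trans maxOver_nonneg (le_max_left _ _)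

lemma theta1_congr {x : ℕ → ℝ} {τ : ℝ} {w w' : ℕ → ℝ} {l t r : ℕ}
    (hlt : l ≤ t) (htr : t ≤ r) (h : ∀ j, l ≤ j → j ≤ r → w j = w' j) :
    theta1 x τ w l t r = theta1 x τ w' l t r := by
  unfold theta1 thetaL thetaR
  congr 1
  · refine maxOver_congr fun i hi => ?_
    rw [Finset.mem_Ico] at hi
    have : ∑ j ∈ Finset.Icc l i, w j = ∑ j ∈ Finset.Icc l i, w' j := by
      refine Finset.sum_congr rfl fun j hj => ?_
      rw [Finset.mem_Icc] at hj
      exact h j hj.1 (by omega)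
    rw [this]
  · refine maxOver_congr fun i hi => ?_
    rw [Finset.mem_Ioc] at hi
    have : ∑ j ∈ Finset.Icc i r, w j = ∑ j ∈ Finset.Icc i r, w' j := by
      refine Finset.sum_congr rfl fun j hj => ?_
      rw [Finset.mem_Icc] at hj
      exact h j (by omega) hj.2
    rw [this]

lemma theta1_mono {x : ℕ → ℝ} {τ : ℝ} {w w' : ℕ → ℝ} {l t r : ℕ}
    (hlt : l ≤ t) (htr : t ≤ r) (h : ∀ j, l ≤ j → j ≤ r → w j ≤ w' j) :
    theta1 x τ w l t r ≤ theta1 x τ w' l t r := by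
  unfold theta1 thetaL thetaR
  refine max_le_max ?_ ?_
  · refine maxOver_le maxOver_nonneg fun i hi => le_trans ?_ (le_maxOver hi)
    rw [Finset.mem_Ico] at hi
    refine add_le_add_right (Finset.sum_le_sum fun j hj => ?_) _
    rw [Finset.mem_Icc] at hj
    exact h j hj.1 (by omega)
  · refine maxOver_le maxOver_nonneg fun i hi => le_trans ?_ (le_maxOver hi)
    rw [Finset.mem_Ioc] at hi
    refine add_le_add_right (Finset.sum_le_sum fun j hj => ?_) _
    rw [Finset.mem_Icc] at hj
    exact h j (by omega) hj.2

lemma theta1_le_add {x : ℕ → ℝ} {τ : ℝ} {s s' : ℕ → ℝ} {Δ : ℝ} (hΔ : 0 ≤ Δ)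
    (hsum : ∀ a b, ∑ j ∈ Finset.Icc a b, s' j ≤ (∑ j ∈ Finset.Icc a b, s j) + Δ)
    (l t r : ℕ) : theta1 x τ s' l t r ≤ theta1 x τ s l t r + Δ := by
  have h0 : (0:ℝ) ≤ theta1 x τ s l t r + Δ := add_nonneg theta1_nonneg hΔ
  unfold theta1 thetaL thetaR
  refine max_le ?_ ?_
  · refine maxOver_le h0 fun i hi => ?_
    have h1 : (x t - x i) * τ + ∑ j ∈ Finset.Icc l i, s' j ≤
        ((x t - x i) * τ + ∑ j ∈ Finset.Icc l i, s j) + Δ := by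
      have := hsum l i; linarith
    calc (x t - x i) * τ + ∑ j ∈ Finset.Icc l i, s' j
        ≤ ((x t - x i) * τ + ∑ j ∈ Finset.Icc l i, s j) + Δ := h1
      _ ≤ maxOver (Finset.Ico l t)
            (fun i => (x t - x i) * τ + ∑ j ∈ Finset.Icc l i, s j) + Δ :=
          add_le_add_left (le_maxOver
            (f := fun i => (x t - x i) * τ + ∑ j ∈ Finset.Icc l i, s j) hi) Δ
      _ ≤ _ := add_le_add_left (le_max_left _ _) Δ
  · refine maxOver_le h0 fun i hi => ?_
    have h1 : (x i - x t) * τ + ∑ j ∈ Finset.Icc i r, s' j ≤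
        ((x i - x t) * τ + ∑ j ∈ Finset.Icc i r, s j) + Δ := by
      have := hsum i r; linarith
    calc (x i - x t) * τ + ∑ j ∈ Finset.Icc i r, s' j
        ≤ ((x i - x t) * τ + ∑ j ∈ Finset.Icc i r, s j) + Δ := h1
      _ ≤ maxOver (Finset.Ioc t r)
            (fun i => (x i - x t) * τ + ∑ j ∈ Finset.Icc i r, s j) + Δ :=
          add_le_add_left (le_maxOver
            (f := fun i => (x i - x t) * τ + ∑ j ∈ Finset.Icc i r, s j) hi) Δ
      _ ≤ _ := add_le_add_left (le_max_right _ _) Δ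

lemma thetaK_nonneg {n k : ℕ} {x : ℕ → ℝ} {τ : ℝ} {PY : KPartSinks n k} {w : ℕ → ℝ} :
    0 ≤ thetaK x τ PY w := maxOver_nonneg

lemma thetaK_le_add {n k : ℕ} {x : ℕ → ℝ} {τ : ℝ} (PY : KPartSinks n k) {s s' : ℕ → ℝ}
    {Δ : ℝ} (hΔ : 0 ≤ Δ)
    (hsum : ∀ a b, ∑ j ∈ Finset.Icc a b, s' j ≤ (∑ j ∈ Finset.Icc a b, s j) + Δ) :
    thetaK x τ PY s' ≤ thetaK x τ PY s + Δ := by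
  unfold thetaK
  refine maxOver_le (add_nonneg maxOver_nonneg hΔ) fun p hp => ?_
  calc theta1 x τ s' (PY.l p) (PY.t p) (PY.r p)
      ≤ theta1 x τ s (PY.l p) (PY.t p) (PY.r p) + Δ := theta1_le_add hΔ hsum _ _ _
    _ ≤ maxOver (Finset.Icc 1 k)
          (fun p => theta1 x τ s (PY.l p) (PY.t p) (PY.r p)) + Δ :=
        add_le_add_left (le_maxOver
          (f := fun p => theta1 x τ s (PY.l p) (PY.t p) (PY.r p)) hp) Δ

lemma thetaOpt_nonneg {n k : ℕ} {x : ℕ → ℝ} {τ : ℝ} (PY0 : KPartSinks n k) {s : ℕ → ℝ} :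
    0 ≤ thetaOpt x τ n k s := by
  refine le_csInf ⟨_, PY0, rfl⟩ ?_
  rintro v ⟨PY', rfl⟩
  exact thetaK_nonneg

lemma thetaOpt_bddBelow {n k : ℕ} {x : ℕ → ℝ} {τ : ℝ} {s : ℕ → ℝ} :
    BddBelow {v : ℝ | ∃ PY : KPartSinks n k, thetaK x τ PY s = v} := by
  refine ⟨0, ?_⟩
  rintro v ⟨PY', rfl⟩
  exact thetaK_nonneg

lemma thetaOpt_le_add {n k : ℕ} {x : ℕ → ℝ} {τ : ℝ} (PY0 : KPartSinks n k) {s s' : ℕ → ℝ}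
    {Δ : ℝ} (hΔ : 0 ≤ Δ)
    (hsum : ∀ a b, ∑ j ∈ Finset.Icc a b, s' j ≤ (∑ j ∈ Finset.Icc a b, s j) + Δ) :
    thetaOpt x τ n k s' ≤ thetaOpt x τ n k s + Δ := by
  rw [← sub_le_iff_le_add]
  refine le_csInf ⟨_, PY0, rfl⟩ ?_
  rintro v ⟨PY', rfl⟩
  rw [sub_le_iff_le_add]
  calc thetaOpt x τ n k s' ≤ thetaK x τ PY' s' := csInf_le thetaOpt_bddBelow ⟨PY', rfl⟩
    _ ≤ thetaK x τ PY' s + Δ := thetaK_le_add PY' hΔ hsum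

lemma r_mono {n k : ℕ} (PY : KPartSinks n k) {p q : ℕ} (hp : 1 ≤ p) (hpq : p ≤ q)
    (hq : q ≤ k) : PY.r p ≤ PY.r q := by
  induction q with
  | zero => omega
  | succ m ih =>
    rcases Nat.lt_or_ge p (m+1) with h | h
    · have h1 : PY.r p ≤ PY.r m := ih (by omega) (by omega)
      have h2 : PY.l (m+1) = PY.r m + 1 := PY.consec m (by omega) (by omega)
      have h3 : PY.l (m+1) ≤ PY.r (m+1) := PY.block_nonempty (m+1) (by omega) hq
      omega
    · have hpm : p = m + 1 := by omega
      rw [hpm]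

lemma r_le_n {n k : ℕ} (PY : KPartSinks n k) {p : ℕ} (hp : 1 ≤ p) (hpk : p ≤ k) :
    PY.r p ≤ n := (r_mono PY hp hpk le_rfl).trans (le_of_eq PY.last)

lemma block_disj {n k : ℕ} (PY : KPartSinks n k) {p q : ℕ} (hp : 1 ≤ p) (hpq : p < q)
    (hq : q ≤ k) : PY.r p < PY.l q := by
  induction q with
  | zero => omega
  | succ m ih =>
    have h2 : PY.l (m+1) = PY.r m + 1 := PY.consec m (by omega) (by omega)
    rcases Nat.lt_or_ge p m with h | h
    · have h1 : PY.r p < PY.l m := ih h (by omega)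
      have h3 : PY.l m ≤ PY.r m := PY.block_nonempty m (by omega) (by omega)
      omega
    · have hpm : p = m := by omega
      rw [hpm]
      omega

lemma x_mono {n : ℕ} {x : ℕ → ℝ} (hx : ∀ i, i < n → x i < x (i + 1)) {a b : ℕ}
    (hab : a ≤ b) (hb : b ≤ n) : x a ≤ x b := by
  induction b with
  | zero => have : a = 0 := by omega
            simp [this]
  | succ m ih =>
    rcases Nat.lt_or_ge a (m+1) with h | h
    · exact (ih (by omega) (by omega)).trans (le_of_lt (hx m (by omega)))
    · have : a = m + 1 := by omega
      simp [this]

lemma regret_bddAbove {n k : ℕ} {x : ℕ → ℝ} {τ : ℝ} {wlo whi : ℕ → ℝ}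
    (PY : KPartSinks n k) :
    BddAbove {v : ℝ | ∃ s : ℕ → ℝ, IsScenario n wlo whi s ∧ regret x τ PY s = v} := by
  refine ⟨thetaK x τ PY whi, ?_⟩
  rintro v ⟨s, hs, rfl⟩
  have h1 : thetaK x τ PY s ≤ thetaK x τ PY whi := by
    unfold thetaK
    refine maxOver_le maxOver_nonneg fun p hp => ?_
    have hp' := Finset.mem_Icc.mp hp
    calc theta1 x τ s (PY.l p) (PY.t p) (PY.r p)
        ≤ theta1 x τ whi (PY.l p) (PY.t p) (PY.r p) :=
          theta1_mono (PY.sink_lb p hp'.1 hp'.2) (PY.sink_ub p hp'.1 hp'.2)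
            fun j hj1 hj2 => (hs j (le_trans hj2 (r_le_n PY hp'.1 hp'.2))).2
      _ ≤ maxOver (Finset.Icc 1 k)
            (fun p => theta1 x τ whi (PY.l p) (PY.t p) (PY.r p)) :=
          le_maxOver (f := fun p => theta1 x τ whi (PY.l p) (PY.t p) (PY.r p)) hp
  have h2 : 0 ≤ thetaOpt x τ n k s := thetaOpt_nonneg PY
  unfold regret
  linarith

lemma exists_dominant {n k : ℕ} (x : ℕ → ℝ) (τ : ℝ) (PY : KPartSinks n k) (w : ℕ → ℝ)
    (hk : 1 ≤ k) : ∃ d, IsDominant x τ PY w d := by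
  classical
  set f : ℕ → ℝ := fun p => theta1 x τ w (PY.l p) (PY.t p) (PY.r p) with hf
  have hP : ∃ d, 1 ≤ d ∧ d ≤ k ∧ ∀ q, 1 ≤ q → q ≤ k → f q ≤ f d := by
    obtain ⟨b, hb, hbmax⟩ := Finset.exists_max_image (Finset.Icc 1 k) f
      ⟨1, by rw [Finset.mem_Icc]; omega⟩
    rw [Finset.mem_Icc] at hb
    exact ⟨b, hb.1, hb.2, fun q h1 h2 => hbmax q (Finset.mem_Icc.mpr ⟨h1, h2⟩)⟩
  set d := Nat.find hP with hd
  obtain ⟨hd1, hd2, hdmax⟩ := Nat.find_spec hP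
  refine ⟨d, hd1, hd2, hdmax, fun p h1 hpd => ?_⟩
  by_contra hle
  push_neg at hle
  exact Nat.find_min hP hpd ⟨h1, by omega, fun q hq1 hq2 => (hdmax q hq1 hq2).trans hle⟩

lemma key_lemma {n k : ℕ} {x : ℕ → ℝ} {τ : ℝ} {wlo whi : ℕ → ℝ}
    (PY : KPartSinks n k) {s s' : ℕ → ℝ} {d : ℕ} {Δ : ℝ}
    (hws : IsWorstCase x τ wlo whi PY s) (hdom : IsDominant x τ PY s d)
    (hs' : IsScenario n wlo whi s') (hΔ : 0 ≤ Δ)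
    (hsum : ∀ a b, ∑ j ∈ Finset.Icc a b, s' j ≤ (∑ j ∈ Finset.Icc a b, s j) + Δ)
    (hgrow : theta1 x τ s (PY.l d) (PY.t d) (PY.r d) + Δ ≤
      theta1 x τ s' (PY.l d) (PY.t d) (PY.r d))
    (houts : ∀ j, j < PY.l d ∨ PY.r d < j → s' j = s j) :
    IsWorstCase x τ wlo whi PY s' ∧ IsDominant x τ PY s' d := by
  obtain ⟨hd1, hd2, hmax, hstrict⟩ := hdom
  have hcongr : ∀ p, 1 ≤ p → p ≤ k → p ≠ d →
      theta1 x τ s' (PY.l p) (PY.t p) (PY.r p) = theta1 x τ s (PY.l p) (PY.t p) (PY.r p) := by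
    intro p h1 h2 hpd
    refine theta1_congr (PY.sink_lb p h1 h2) (PY.sink_ub p h1 h2) fun j hj1 hj2 =>
      houts j ?_
    rcases Nat.lt_or_ge p d with h | h
    · left; have := block_disj PY h1 h hd2; omega
    · right
      have hdp : d < p := by omega
      have := block_disj PY hd1 hdp h2
      omega
  have hdIcc : d ∈ Finset.Icc 1 k := Finset.mem_Icc.mpr ⟨hd1, hd2⟩
  have hKs : thetaK x τ PY s = theta1 x τ s (PY.l d) (PY.t d) (PY.r d) := by
    unfold thetaK
    refine le_antisymm (maxOver_le theta1_nonneg fun p hp => ?_)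
      (le_maxOver (f := fun p => theta1 x τ s (PY.l p) (PY.t p) (PY.r p)) hdIcc)
    rw [Finset.mem_Icc] at hp
    exact hmax p hp.1 hp.2
  have hKs' : theta1 x τ s' (PY.l d) (PY.t d) (PY.r d) ≤ thetaK x τ PY s' := by
    unfold thetaK
    exact le_maxOver (f := fun p => theta1 x τ s' (PY.l p) (PY.t p) (PY.r p)) hdIcc
  have hOpt : thetaOpt x τ n k s' ≤ thetaOpt x τ n k s + Δ := thetaOpt_le_add PY hΔ hsum
  have hreg : regret x τ PY s ≤ regret x τ PY s' := by
    unfold regret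
    have : thetaK x τ PY s + Δ ≤ thetaK x τ PY s' := by rw [hKs]; linarith
    linarith
  have hmem : regret x τ PY s' ∈ {v : ℝ | ∃ s : ℕ → ℝ, IsScenario n wlo whi s ∧
      regret x τ PY s = v} := ⟨s', hs', rfl⟩
  have hws' : regret x τ PY s' = maxRegret x τ wlo whi PY :=
    le_antisymm (le_csSup (regret_bddAbove PY) hmem) (hws.2 ▸ hreg)
  have hgrow' : theta1 x τ s (PY.l d) (PY.t d) (PY.r d) ≤
      theta1 x τ s' (PY.l d) (PY.t d) (PY.r d) := by linarith
  refine ⟨⟨hs', hws'⟩, hd1, hd2, fun p h1 h2 => ?_, fun p h1 hpd => ?_⟩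
  · by_cases hpd : p = d
    · subst hpd; exact le_rfl
    · rw [hcongr p h1 h2 hpd]
      exact (hmax p h1 h2).trans hgrow'
  · rw [hcongr p h1 (by omega) (by omega)]
    exact lt_of_lt_of_le (hstrict p h1 hpd) hgrow'

/-- there is a worst-case scenario whose restriction to its
dominant part is left-dominant or right-dominant. -/
theorem stmt_1 (n k : ℕ) (x : ℕ → ℝ) (τ : ℝ) (wlo whi : ℕ → ℝ)
    (hx : ∀ i, i < n → x i < x (i + 1)) (hτ : 0 < τ)
    (hw : ∀ i, i ≤ n → 0 < wlo i ∧ wlo i ≤ whi i) (hk : 1 ≤ k)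
    (PY : KPartSinks n k)
    (hex : ∃ s, IsWorstCase x τ wlo whi PY s) :
    ∃ s d, IsWorstCase x τ wlo whi PY s ∧ IsDominant x τ PY s d ∧
      (LeftDominant wlo whi s (PY.l d) (PY.r d) ∨
       RightDominant wlo whi s (PY.l d) (PY.r d)) := by
  classical
  obtain ⟨s, hws⟩ := hex
  obtain ⟨d, hdom⟩ := exists_dominant x τ PY s hk
  have hd1 : 1 ≤ d := hdom.1
  have hd2 : d ≤ k := hdom.2.1
  have hlt : PY.l d ≤ PY.t d := PY.sink_lb d hd1 hd2
  have htr : PY.t d ≤ PY.r d := PY.sink_ub d hd1 hd2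
  have hrn : PY.r d ≤ n := r_le_n PY hd1 hd2
  have hsc : IsScenario n wlo whi s := hws.1
  by_cases hcase : thetaR x τ s (PY.t d) (PY.r d) ≤ thetaL x τ s (PY.l d) (PY.t d)
  · by_cases hlt' : PY.l d < PY.t d
    · -- Case A : left side dominates and is nonempty
      obtain ⟨i0, hi0mem, hi0max⟩ := Finset.exists_max_image
        (Finset.Ico (PY.l d) (PY.t d))
        (fun i => (x (PY.t d) - x i) * τ + ∑ j ∈ Finset.Icc (PY.l d) i, s j)
        ⟨PY.l d, Finset.mem_Ico.mpr ⟨le_rfl, hlt'⟩⟩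
      obtain ⟨hi01, hi02⟩ := Finset.mem_Ico.mp hi0mem
      set s' : ℕ → ℝ := fun j => if PY.l d ≤ j ∧ j ≤ i0 then whi j
        else if i0 < j ∧ j ≤ PY.r d then wlo j else s j with hs'def
      set Δ : ℝ := ∑ j ∈ Finset.Icc (PY.l d) i0, (whi j - s j) with hΔdef
      have hin : ∀ j, j ≤ i0 → j ≤ n := fun j hj => by omega
      have hΔ : (0:ℝ) ≤ Δ := by
        rw [hΔdef]
        refine Finset.sum_nonneg fun j hj => ?_
        have hj' := Finset.mem_Icc.mp hj
        have h1 := hsc j (hin j hj'.2)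
        linarith [h1.2]
      have hs'scen : IsScenario n wlo whi s' := by
        intro j hj
        simp only [hs'def]
        split_ifs with h1 h2
        · exact ⟨(hw j hj).2, le_rfl⟩
        · exact ⟨le_rfl, (hw j hj).2⟩
        · exact hsc j hj
      have hsum : ∀ a b, ∑ j ∈ Finset.Icc a b, s' j ≤ (∑ j ∈ Finset.Icc a b, s j) + Δ := by
        intro a b
        have h1 : ∀ j ∈ Finset.Icc a b, s' j ≤
            s j + (if j ∈ Finset.Icc (PY.l d) i0 then whi j - s j else 0) := by
          intro j _
          simp only [hs'def, Finset.mem_Icc]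
          split_ifs with hA hB
          · linarith
          · have h2 := hsc j (le_trans hB.2 hrn)
            linarith [h2.1]
          · linarith
        calc ∑ j ∈ Finset.Icc a b, s' j
            ≤ ∑ j ∈ Finset.Icc a b,
                (s j + (if j ∈ Finset.Icc (PY.l d) i0 then whi j - s j else 0)) :=
              Finset.sum_le_sum h1
          _ = (∑ j ∈ Finset.Icc a b, s j) +
                ∑ j ∈ Finset.Icc a b,
                  (if j ∈ Finset.Icc (PY.l d) i0 then whi j - s j else 0) :=
              Finset.sum_add_distrib
          _ ≤ (∑ j ∈ Finset.Icc a b, s j) + Δ := by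
              refine add_le_add_right ?_ _
              rw [Finset.sum_ite_mem, hΔdef]
              refine Finset.sum_le_sum_of_subset_of_nonneg Finset.inter_subset_right ?_
              intro j hj _
              have hj' := Finset.mem_Icc.mp hj
              have h2 := hsc j (hin j hj'.2)
              linarith [h2.2]
      have hterm0 : (0:ℝ) ≤ (x (PY.t d) - x i0) * τ + ∑ j ∈ Finset.Icc (PY.l d) i0, s j := by
        have hxx : x i0 ≤ x (PY.t d) := x_mono hx (le_of_lt hi02) (le_trans htr hrn)
        have hsum0 : (0:ℝ) ≤ ∑ j ∈ Finset.Icc (PY.l d) i0, s j := by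
          refine Finset.sum_nonneg fun j hj => ?_
          have hj' := Finset.mem_Icc.mp hj
          have h1 := hsc j (hin j hj'.2)
          have h2 := hw j (hin j hj'.2)
          linarith [h1.1, h2.1]
        have h3 := mul_nonneg (sub_nonneg.mpr hxx) hτ.le
        linarith
      have hL : thetaL x τ s (PY.l d) (PY.t d) =
          (x (PY.t d) - x i0) * τ + ∑ j ∈ Finset.Icc (PY.l d) i0, s j := by
        unfold thetaL
        exact le_antisymm (maxOver_le hterm0 hi0max)
          (le_maxOver (f := fun i => (x (PY.t d) - x i) * τ +
            ∑ j ∈ Finset.Icc (PY.l d) i, s j) hi0mem)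
      have hswhi : ∑ j ∈ Finset.Icc (PY.l d) i0, s' j =
          ∑ j ∈ Finset.Icc (PY.l d) i0, whi j := by
        refine Finset.sum_congr rfl fun j hj => ?_
        have hj' := Finset.mem_Icc.mp hj
        simp only [hs'def]
        rw [if_pos hj']
      have hgrow : theta1 x τ s (PY.l d) (PY.t d) (PY.r d) + Δ ≤
          theta1 x τ s' (PY.l d) (PY.t d) (PY.r d) := by
        have h1 : theta1 x τ s (PY.l d) (PY.t d) (PY.r d) =
            thetaL x τ s (PY.l d) (PY.t d) := max_eq_left hcase
        have h2 : (x (PY.t d) - x i0) * τ + ∑ j ∈ Finset.Icc (PY.l d) i0, s' j ≤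
            thetaL x τ s' (PY.l d) (PY.t d) :=
          le_maxOver (f := fun i => (x (PY.t d) - x i) * τ +
            ∑ j ∈ Finset.Icc (PY.l d) i, s' j) hi0mem
        have h3 : thetaL x τ s' (PY.l d) (PY.t d) ≤
            theta1 x τ s' (PY.l d) (PY.t d) (PY.r d) := le_max_left _ _
        have h4 : ∑ j ∈ Finset.Icc (PY.l d) i0, whi j =
            (∑ j ∈ Finset.Icc (PY.l d) i0, s j) + Δ := by
          rw [hΔdef, Finset.sum_sub_distrib]
          ring
        rw [h1, hL]
        linarith [h2.trans h3]
      have houts : ∀ j, j < PY.l d ∨ PY.r d < j → s' j = s j := by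
        intro j hj
        simp only [hs'def]
        rw [if_neg (by omega), if_neg (by omega)]
      obtain ⟨hws', hdom'⟩ := key_lemma PY hws hdom hs'scen hΔ hsum hgrow houts
      refine ⟨s', d, hws', hdom', Or.inl ⟨i0 + 1, by omega, by omega, ?_, ?_⟩⟩
      · intro j hj1 hj2
        simp only [hs'def]
        rw [if_pos ⟨hj1, by omega⟩]
      · intro j hj1 hj2
        simp only [hs'def]
        rw [if_neg (by omega), if_pos ⟨by omega, hj2⟩]
    · -- Case C : single-vertex part
      have hleq : PY.l d = PY.t d := le_antisymm hlt (not_lt.mp hlt')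
      have hL0 : thetaL x τ s (PY.l d) (PY.t d) = 0 := by
        unfold thetaL maxOver
        rw [hleq, Finset.Ico_self, Finset.fold_empty]
      have hteq : PY.t d = PY.r d := by
        by_contra hne
        have htlt : PY.t d < PY.r d := lt_of_le_of_ne htr hne
        have hmem : PY.t d + 1 ∈ Finset.Ioc (PY.t d) (PY.r d) :=
          Finset.mem_Ioc.mpr ⟨by omega, by omega⟩
        have h1 : (x (PY.t d + 1) - x (PY.t d)) * τ +
            ∑ j ∈ Finset.Icc (PY.t d + 1) (PY.r d), s j ≤
            thetaR x τ s (PY.t d) (PY.r d) :=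
          le_maxOver (f := fun i => (x i - x (PY.t d)) * τ +
            ∑ j ∈ Finset.Icc i (PY.r d), s j) hmem
        have hxx : x (PY.t d) < x (PY.t d + 1) := hx _ (by omega)
        have hsum0 : (0:ℝ) < ∑ j ∈ Finset.Icc (PY.t d + 1) (PY.r d), s j := by
          refine Finset.sum_pos (fun j hj => ?_)
            ⟨PY.r d, Finset.mem_Icc.mpr ⟨by omega, le_rfl⟩⟩
          have hj' := Finset.mem_Icc.mp hj
          have h2 := hsc j (by omega)
          have h3 := hw j (by omega)
          linarith [h2.1, h3.1]
        have h5 := mul_pos (sub_pos.mpr hxx) hτ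
        rw [hL0] at hcase
        linarith
      set s' : ℕ → ℝ := fun j => if PY.l d ≤ j ∧ j ≤ PY.r d then wlo j else s j
        with hs'def
      have hs'scen : IsScenario n wlo whi s' := by
        intro j hj
        simp only [hs'def]
        split_ifs with h1
        · exact ⟨le_rfl, (hw j hj).2⟩
        · exact hsc j hj
      have hsum : ∀ a b, ∑ j ∈ Finset.Icc a b, s' j ≤
          (∑ j ∈ Finset.Icc a b, s j) + (0:ℝ) := by
        intro a b
        rw [add_zero]
        refine Finset.sum_le_sum fun j hj => ?_
        simp only [hs'def]
        split_ifs with h1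
        · exact (hsc j (le_trans h1.2 hrn)).1
        · exact le_rfl
      have hgrow : theta1 x τ s (PY.l d) (PY.t d) (PY.r d) + (0:ℝ) ≤
          theta1 x τ s' (PY.l d) (PY.t d) (PY.r d) := by
        have h1 : theta1 x τ s (PY.l d) (PY.t d) (PY.r d) = 0 := by
          unfold theta1 thetaL thetaR maxOver
          rw [hleq, hteq, Finset.Ico_self, Finset.Ioc_self, Finset.fold_empty,
            Finset.fold_empty, max_self]
        rw [h1, zero_add]
        exact theta1_nonneg
      have houts : ∀ j, j < PY.l d ∨ PY.r d < j → s' j = s j := by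
        intro j hj
        simp only [hs'def]
        rw [if_neg (by omega)]
      obtain ⟨hws', hdom'⟩ := key_lemma PY hws hdom hs'scen le_rfl hsum hgrow houts
      refine ⟨s', d, hws', hdom', Or.inl ⟨PY.l d, le_rfl, by omega, ?_, ?_⟩⟩
      · intro j hj1 hj2
        exact absurd (lt_of_le_of_lt hj1 hj2) (lt_irrefl _)
      · intro j hj1 hj2
        simp only [hs'def]
        rw [if_pos ⟨hj1, hj2⟩]
  · -- Case B : right side strictly dominates
    push_neg at hcase
    have htlt : PY.t d < PY.r d := by
      by_contra h
      have hteq : PY.t d = PY.r d := le_antisymm htr (not_lt.mp h)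
      have hR0 : thetaR x τ s (PY.t d) (PY.r d) = 0 := by
        unfold thetaR maxOver
        rw [hteq, Finset.Ioc_self, Finset.fold_empty]
      have h0 : (0:ℝ) ≤ thetaL x τ s (PY.l d) (PY.t d) := maxOver_nonneg
      rw [hR0] at hcase
      linarith
    obtain ⟨i0, hi0mem, hi0max⟩ := Finset.exists_max_image
      (Finset.Ioc (PY.t d) (PY.r d))
      (fun i => (x i - x (PY.t d)) * τ + ∑ j ∈ Finset.Icc i (PY.r d), s j)
      ⟨PY.r d, Finset.mem_Ioc.mpr ⟨htlt, le_rfl⟩⟩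
    obtain ⟨hi01, hi02⟩ := Finset.mem_Ioc.mp hi0mem
    set s' : ℕ → ℝ := fun j => if PY.l d ≤ j ∧ j < i0 then wlo j
      else if i0 ≤ j ∧ j ≤ PY.r d then whi j else s j with hs'def
    set Δ : ℝ := ∑ j ∈ Finset.Icc i0 (PY.r d), (whi j - s j) with hΔdef
    have hin : ∀ j, j ≤ PY.r d → j ≤ n := fun j hj => le_trans hj hrn
    have hΔ : (0:ℝ) ≤ Δ := by
      rw [hΔdef]
      refine Finset.sum_nonneg fun j hj => ?_
      have hj' := Finset.mem_Icc.mp hj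
      have h1 := hsc j (hin j hj'.2)
      linarith [h1.2]
    have hs'scen : IsScenario n wlo whi s' := by
      intro j hj
      simp only [hs'def]
      split_ifs with h1 h2
      · exact ⟨le_rfl, (hw j hj).2⟩
      · exact ⟨(hw j hj).2, le_rfl⟩
      · exact hsc j hj
    have hsum : ∀ a b, ∑ j ∈ Finset.Icc a b, s' j ≤ (∑ j ∈ Finset.Icc a b, s j) + Δ := by
      intro a b
      have h1 : ∀ j ∈ Finset.Icc a b, s' j ≤
          s j + (if j ∈ Finset.Icc i0 (PY.r d) then whi j - s j else 0) := by
        intro j _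
        simp only [hs'def, Finset.mem_Icc]
        split_ifs with hA hB hB'
        · have h3 := hw j (by omega)
          linarith [h3.2]
        · have h2 := hsc j (by omega)
          linarith [h2.1]
        · linarith
        · linarith
      calc ∑ j ∈ Finset.Icc a b, s' j
          ≤ ∑ j ∈ Finset.Icc a b,
              (s j + (if j ∈ Finset.Icc i0 (PY.r d) then whi j - s j else 0)) :=
            Finset.sum_le_sum h1
        _ = (∑ j ∈ Finset.Icc a b, s j) +
              ∑ j ∈ Finset.Icc a b,
                (if j ∈ Finset.Icc i0 (PY.r d) then whi j - s j else 0) :=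
            Finset.sum_add_distrib
        _ ≤ (∑ j ∈ Finset.Icc a b, s j) + Δ := by
            refine add_le_add_right ?_ _
            rw [Finset.sum_ite_mem, hΔdef]
            refine Finset.sum_le_sum_of_subset_of_nonneg Finset.inter_subset_right ?_
            intro j hj _
            have hj' := Finset.mem_Icc.mp hj
            have h2 := hsc j (hin j hj'.2)
            linarith [h2.2]
    have hterm0 : (0:ℝ) ≤ (x i0 - x (PY.t d)) * τ + ∑ j ∈ Finset.Icc i0 (PY.r d), s j := by
      have hxx : x (PY.t d) ≤ x i0 := x_mono hx (le_of_lt hi01) (hin i0 hi02)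
      have hsum0 : (0:ℝ) ≤ ∑ j ∈ Finset.Icc i0 (PY.r d), s j := by
        refine Finset.sum_nonneg fun j hj => ?_
        have hj' := Finset.mem_Icc.mp hj
        have h1 := hsc j (hin j hj'.2)
        have h2 := hw j (hin j hj'.2)
        linarith [h1.1, h2.1]
      have h3 := mul_nonneg (sub_nonneg.mpr hxx) hτ.le
      linarith
    have hR : thetaR x τ s (PY.t d) (PY.r d) =
        (x i0 - x (PY.t d)) * τ + ∑ j ∈ Finset.Icc i0 (PY.r d), s j := by
      unfold thetaR
      exact le_antisymm (maxOver_le hterm0 hi0max)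
        (le_maxOver (f := fun i => (x i - x (PY.t d)) * τ +
          ∑ j ∈ Finset.Icc i (PY.r d), s j) hi0mem)
    have hswhi : ∑ j ∈ Finset.Icc i0 (PY.r d), s' j =
        ∑ j ∈ Finset.Icc i0 (PY.r d), whi j := by
      refine Finset.sum_congr rfl fun j hj => ?_
      have hj' := Finset.mem_Icc.mp hj
      simp only [hs'def]
      rw [if_neg (by omega), if_pos hj']
    have hgrow : theta1 x τ s (PY.l d) (PY.t d) (PY.r d) + Δ ≤
        theta1 x τ s' (PY.l d) (PY.t d) (PY.r d) := by
      have h1 : theta1 x τ s (PY.l d) (PY.t d) (PY.r d) =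
          thetaR x τ s (PY.t d) (PY.r d) := max_eq_right hcase.le
      have h2 : (x i0 - x (PY.t d)) * τ + ∑ j ∈ Finset.Icc i0 (PY.r d), s' j ≤
          thetaR x τ s' (PY.t d) (PY.r d) :=
        le_maxOver (f := fun i => (x i - x (PY.t d)) * τ +
          ∑ j ∈ Finset.Icc i (PY.r d), s' j) hi0mem
      have h3 : thetaR x τ s' (PY.t d) (PY.r d) ≤
          theta1 x τ s' (PY.l d) (PY.t d) (PY.r d) := le_max_right _ _
      have h4 : ∑ j ∈ Finset.Icc i0 (PY.r d), whi j =
          (∑ j ∈ Finset.Icc i0 (PY.r d), s j) + Δ := by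
        rw [hΔdef, Finset.sum_sub_distrib]
        ring
      rw [h1, hR]
      linarith [h2.trans h3]
    have houts : ∀ j, j < PY.l d ∨ PY.r d < j → s' j = s j := by
      intro j hj
      simp only [hs'def]
      rw [if_neg (by omega), if_neg (by omega)]
    obtain ⟨hws', hdom'⟩ := key_lemma PY hws hdom hs'scen hΔ hsum hgrow houts
    refine ⟨s', d, hws', hdom', Or.inr ⟨i0, by omega, by omega, ?_, ?_⟩⟩
    · intro j hj1 hj2
      simp only [hs'def]
      rw [if_pos ⟨hj1, hj2⟩]
    · intro j hj1 hj2
      simp only [hs'def]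
      rw [if_neg (by omega), if_pos ⟨hj1, hj2⟩]
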